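/- Let A be an integral domain, integrally closed in its field of fractions K, H a Z-graded associative A-algebra, finitely generated and free over A, θ : A → L a ring homomorphism into a field L with L the field of fractions of θ(A), and O ⊆ K a valuation ring with A ⊆ O and J(O) ∩ A = Ker(θ); assume LH is split, or L equals the residue field k of O and L is perfect. Then the graded decomposition map d^gr_θ satisfies the commutative diagram p_L ∘ d^gr_θ = t_θ ∘ p_K : R_0^+(KH) → Maps(H_0, L[X]^Z), where t_θ is obtained by applying θ to the coefficients of polynomials in A[X]. Concretely: for every finite-dimensional graded KH-module V with graded OH-lattice Ṽ, every h_0 ∈ H_0 and every i ∈ Z, the characteristic polynomial of the action of h_0 on (k ⊗_O Ṽ)_i is obtained by applying θ coefficientwise to the characteristic polynomial of ρ_{V_i}(h_0), which lies in A[X]. -/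

import Mathlib

universe u

open DirectSum Function

/-! ## Modules over `S ⊗_A H`

For an `A`-algebra `H` and a commutative `A`-algebra `S`, a (finitely generated) module over
the `S`-algebra `S ⊗_A H` is the same thing as an `S`-module together with a commuting
`H`-action such that the two induced `A`-actions agree.  We package this data in a structure. -/

structure ModPkg (A : Type u) [CommRing A] (H : Type u) [Ring H] [Algebra A H]
    (S : Type u) [CommRing S] [Algebra A S] : Type (u + 1) where
  carrier : Type u
  [acg : AddCommGroup carrier]
  [modS : Module S carrier]
  [modH : Module H carrier]
  smul_comm' : ∀ (h : H) (s : S) (x : carrier), h • s • x = s • h • x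
  compat : ∀ (a : A) (x : carrier), (algebraMap A H a) • x = (algebraMap A S a) • x
  [fin : Module.Finite S carrier]

attribute [instance] ModPkg.acg ModPkg.modS ModPkg.modH ModPkg.fin

section Ungraded

variable {A : Type u} [CommRing A] {H : Type u} [Ring H] [Algebra A H]
  {S : Type u} [CommRing S] [Algebra A S]

namespace ModPkg

/-- A subgroup stable under both scalar actions, i.e. an `S ⊗_A H`-submodule. -/
def IsStable (M : ModPkg A H S) (p : AddSubgroup M.carrier) : Prop :=
  (∀ (s : S), ∀ x ∈ p, s • x ∈ p) ∧ (∀ (h : H), ∀ x ∈ p, h • x ∈ p)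

/-- Simplicity of an `S ⊗_A H`-module. -/
def Simple (M : ModPkg A H S) : Prop :=
  Nontrivial M.carrier ∧ ∀ p : AddSubgroup M.carrier, M.IsStable p → p = ⊥ ∨ p = ⊤

/-- Isomorphism of `S ⊗_A H`-modules. -/
def Iso (M N : ModPkg A H S) : Prop :=
  ∃ e : M.carrier ≃+ N.carrier,
    (∀ (s : S) (x : M.carrier), e (s • x) = s • e x) ∧
    (∀ (h : H) (x : M.carrier), e (h • x) = h • e x)

/-- The action of an element of `H` as an `S`-linear endomorphism. -/
noncomputable def act (M : ModPkg A H S) (h : H) : M.carrier →ₗ[S] M.carrier where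
  toFun x := h • x
  map_add' x y := smul_add h x y
  map_smul' s x := by simpa using M.smul_comm' h s x

/-- The character of an `S ⊗_A H`-module, as a function on `H`. -/
noncomputable def char (M : ModPkg A H S) : H → S :=
  fun h => LinearMap.trace S M.carrier (M.act h)

/-- The factor `q/p` is isomorphic to `M` (as `S ⊗_A H`-modules), witnessed by a surjection
`q → M` with kernel `p`. -/
def IsFactor (V : ModPkg A H S) (p q : AddSubgroup V.carrier) (M : ModPkg A H S) : Prop :=
  ∃ φ : q →+ M.carrier,
    Surjective φ ∧
    (∀ x : q, φ x = 0 ↔ (x : V.carrier) ∈ p) ∧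
    (∀ (s : S) (x y : q), (y : V.carrier) = s • (x : V.carrier) → φ y = s • φ x) ∧
    (∀ (h : H) (x y : q), (y : V.carrier) = h • (x : V.carrier) → φ y = h • φ x)

end ModPkg

/-- An (ungraded) composition series of an `S ⊗_A H`-module. -/
structure CompSeries (V : ModPkg A H S) : Type u where
  len : ℕ
  c : Fin (len + 1) → AddSubgroup V.carrier
  mono : ∀ t : Fin len, c t.castSucc ≤ c t.succ
  bot : c 0 = ⊥
  top : c (Fin.last len) = ⊤
  stable : ∀ t, V.IsStable (c t)
  steps : ∀ t : Fin len, c t.castSucc ≠ c t.succ ∧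
    ∀ p : AddSubgroup V.carrier, V.IsStable p → c t.castSucc ≤ p → p ≤ c t.succ →
      p = c t.castSucc ∨ p = c t.succ

/-- The multiplicity of the simple module `M` in a composition series. -/
noncomputable def ModPkg.mult (V : ModPkg A H S) (cs : CompSeries V) (M : ModPkg A H S) : ℕ :=
  Nat.card { t : Fin cs.len // V.IsFactor (cs.c t.castSucc) (cs.c t.succ) M }

end Ungraded

/-- The algebra `S ⊗_A H` is split: the endomorphism algebra of every simple module is `S`. -/
def SplitAlg (A : Type u) [CommRing A] (H : Type u) [Ring H] [Algebra A H]
    (S : Type u) [CommRing S] [Algebra A S] : Prop :=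
  ∀ M : ModPkg A H S, M.Simple →
    ∀ f : M.carrier →+ M.carrier,
      (∀ (s : S) (x : M.carrier), f (s • x) = s • f x) →
      (∀ (h : H) (x : M.carrier), f (h • x) = h • f x) →
      ∃ s : S, ∀ x, f x = s • x

/-- The set of irreducible characters of `S ⊗_A H`. -/
def IrrChars (A : Type u) [CommRing A] (H : Type u) [Ring H] [Algebra A H]
    (S : Type u) [CommRing S] [Algebra A S] : Set (H → S) :=
  { χ | ∃ M : ModPkg A H S, M.Simple ∧ χ = M.char }

/-! ## Graded modules over `S ⊗_A H` for a `ℤ`-graded algebra `H = ⊕ 𝒜 i` -/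

structure GrMod (A : Type u) [CommRing A] (H : Type u) [Ring H] [Algebra A H]
    (𝒜 : ℤ → Submodule A H) (S : Type u) [CommRing S] [Algebra A S] : Type (u + 1) where
  carrier : Type u
  [acg : AddCommGroup carrier]
  [modS : Module S carrier]
  [modH : Module H carrier]
  smul_comm' : ∀ (h : H) (s : S) (x : carrier), h • s • x = s • h • x
  compat : ∀ (a : A) (x : carrier), (algebraMap A H a) • x = (algebraMap A S a) • x
  [fin : Module.Finite S carrier]
  grading : ℤ → Submodule S carrier
  [decomp : DirectSum.Decomposition grading]
  grading_smul : ∀ (i j : ℤ) (h : H), h ∈ 𝒜 i → ∀ x ∈ grading j, h • x ∈ grading (i + j)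

attribute [instance] GrMod.acg GrMod.modS GrMod.modH GrMod.fin GrMod.decomp

section Graded

variable {A : Type u} [CommRing A] {H : Type u} [Ring H] [Algebra A H]
  {𝒜 : ℤ → Submodule A H} {S : Type u} [CommRing S] [Algebra A S]

namespace GrMod

/-- The underlying ungraded module of a graded module. -/
def forget (V : GrMod A H 𝒜 S) : ModPkg A H S where
  carrier := V.carrier
  acg := V.acg
  modS := V.modS
  modH := V.modH
  smul_comm' := V.smul_comm'
  compat := V.compat
  fin := V.fin

/-- The action of a degree-`0` element of `H` on the degree-`i` piece of a graded module,
as an `S`-linear endomorphism; this is the representation `ρ_{V_i}` restricted to `H_0`. -/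
noncomputable def degAct (V : GrMod A H 𝒜 S) (h : 𝒜 0) (i : ℤ) :
    V.grading i →ₗ[S] V.grading i where
  toFun x := ⟨(h : H) • (x : V.carrier), by
    simpa using V.grading_smul 0 i (h : H) h.2 (x : V.carrier) x.2⟩
  map_add' x y := by
    apply Subtype.ext
    simp [smul_add]
  map_smul' s x := by
    apply Subtype.ext
    simpa using V.smul_comm' (h : H) s (x : V.carrier)

/-- A subgroup which is an `S ⊗_A H`-submodule and is graded. -/
def IsGrSub (V : GrMod A H 𝒜 S) (p : AddSubgroup V.carrier) : Prop :=
  V.forget.IsStable p ∧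
    ∀ x ∈ p, ∀ i : ℤ, ((DirectSum.decompose V.grading x i : V.grading i) : V.carrier) ∈ p

/-- A graded module is graded-simple if it is nonzero and has no nontrivial graded submodule. -/
def GrSimple (V : GrMod A H 𝒜 S) : Prop :=
  Nontrivial V.carrier ∧ ∀ p : AddSubgroup V.carrier, V.IsGrSub p → p = ⊥ ∨ p = ⊤

/-- Isomorphism of graded modules. -/
def GrIso (V W : GrMod A H 𝒜 S) : Prop :=
  ∃ e : V.carrier ≃+ W.carrier,
    (∀ (s : S) (x : V.carrier), e (s • x) = s • e x) ∧
    (∀ (h : H) (x : V.carrier), e (h • x) = h • e x) ∧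
    (∀ (i : ℤ), ∀ x ∈ V.grading i, e x ∈ W.grading i)

/-- `W` is the shift `V⟨j⟩` of `V`, i.e. `W_i = V_{i-j}`. -/
def IsShiftOf (W V : GrMod A H 𝒜 S) (j : ℤ) : Prop :=
  ∃ e : W.carrier ≃+ V.carrier,
    (∀ (s : S) (x : W.carrier), e (s • x) = s • e x) ∧
    (∀ (h : H) (x : W.carrier), e (h • x) = h • e x) ∧
    (∀ (i : ℤ), ∀ x ∈ W.grading i, e x ∈ V.grading (i - j))

/-- The factor `q/p` of a graded module is isomorphic, as a graded module, to the shift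
`M⟨n⟩` of `M`. -/
def IsFactorShift (V : GrMod A H 𝒜 S) (p q : AddSubgroup V.carrier)
    (M : GrMod A H 𝒜 S) (n : ℤ) : Prop :=
  ∃ φ : q →+ M.carrier,
    Surjective φ ∧
    (∀ x : q, φ x = 0 ↔ (x : V.carrier) ∈ p) ∧
    (∀ (s : S) (x y : q), (y : V.carrier) = s • (x : V.carrier) → φ y = s • φ x) ∧
    (∀ (h : H) (x y : q), (y : V.carrier) = h • (x : V.carrier) → φ y = h • φ x) ∧
    (∀ (i : ℤ) (x : q), (x : V.carrier) ∈ V.grading i → φ x ∈ M.grading (i - n)) ∧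
    (∀ (i : ℤ), ∀ m ∈ M.grading (i - n), ∃ x : q, (x : V.carrier) ∈ V.grading i ∧ φ x = m)

end GrMod

/-- A graded composition series of a graded module. -/
structure GrCompSeries (V : GrMod A H 𝒜 S) : Type u where
  len : ℕ
  c : Fin (len + 1) → AddSubgroup V.carrier
  mono : ∀ t : Fin len, c t.castSucc ≤ c t.succ
  bot : c 0 = ⊥
  top : c (Fin.last len) = ⊤
  graded : ∀ t, V.IsGrSub (c t)
  steps : ∀ t : Fin len, c t.castSucc ≠ c t.succ ∧
    ∀ p : AddSubgroup V.carrier, V.IsGrSub p → c t.castSucc ≤ p → p ≤ c t.succ →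
      p = c t.castSucc ∨ p = c t.succ

/-- The multiplicity `[V : M⟨n⟩]^gr` of the shifted graded simple module `M⟨n⟩` in a graded
composition series of `V`. -/
noncomputable def GrMod.multShift (V : GrMod A H 𝒜 S) (cs : GrCompSeries V)
    (M : GrMod A H 𝒜 S) (n : ℤ) : ℕ :=
  Nat.card { t : Fin cs.len // V.IsFactorShift (cs.c t.castSucc) (cs.c t.succ) M n }

/-- The graded decomposition number `∑_n q^n [V : M⟨n⟩]^gr ∈ ℕ[q,q⁻¹]`. -/
noncomputable def GrMod.entryPoly (V : GrMod A H 𝒜 S) (cs : GrCompSeries V)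
    (M : GrMod A H 𝒜 S) : LaurentPolynomial ℕ :=
  ∑ᶠ n : ℤ, (V.multShift cs M n) • LaurentPolynomial.T n

/-- A short exact sequence of graded modules (morphisms are of degree `0`). -/
structure GrSES (X Y Z : GrMod A H 𝒜 S) : Type u where
  f : X.carrier →+ Y.carrier
  g : Y.carrier →+ Z.carrier
  f_smulS : ∀ (s : S) (x : X.carrier), f (s • x) = s • f x
  f_smulH : ∀ (h : H) (x : X.carrier), f (h • x) = h • f x
  g_smulS : ∀ (s : S) (y : Y.carrier), g (s • y) = s • g y
  g_smulH : ∀ (h : H) (y : Y.carrier), g (h • y) = h • g y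
  inj : Injective f
  surj : Surjective g
  exact : ∀ y : Y.carrier, g y = 0 ↔ ∃ x, f x = y
  f_graded : ∀ (i : ℤ), ∀ x ∈ X.grading i, f x ∈ Y.grading i
  g_graded : ∀ (i : ℤ), ∀ y ∈ Y.grading i, g y ∈ Z.grading i

end Graded

/-- The defining relations of the Grothendieck group of finite-dimensional graded modules. -/
def grRelSet (A : Type u) [CommRing A] (H : Type u) [Ring H] [Algebra A H]
    (𝒜 : ℤ → Submodule A H) (S : Type u) [CommRing S] [Algebra A S] :
    Set (FreeAbelianGroup (GrMod A H 𝒜 S)) :=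
  { z | ∃ X Y Z : GrMod A H 𝒜 S, Nonempty (GrSES X Y Z) ∧
      z = FreeAbelianGroup.of Y - FreeAbelianGroup.of X - FreeAbelianGroup.of Z }

/-- The Grothendieck group `R_0(S ⊗_A H)` of finite-dimensional graded modules. -/
def Groth (A : Type u) [CommRing A] (H : Type u) [Ring H] [Algebra A H]
    (𝒜 : ℤ → Submodule A H) (S : Type u) [CommRing S] [Algebra A S] : Type (u + 1) :=
  FreeAbelianGroup (GrMod A H 𝒜 S) ⧸ AddSubgroup.closure (grRelSet A H 𝒜 S)

noncomputable instance (A : Type u) [CommRing A] (H : Type u) [Ring H] [Algebra A H]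
    (𝒜 : ℤ → Submodule A H) (S : Type u) [CommRing S] [Algebra A S] :
    AddCommGroup (Groth A H 𝒜 S) :=
  inferInstanceAs
    (AddCommGroup (FreeAbelianGroup (GrMod A H 𝒜 S) ⧸ AddSubgroup.closure (grRelSet A H 𝒜 S)))

/-- The class `[V]` of a graded module in the Grothendieck group; `R_0^+` is the set of
all such classes. -/
def GrMod.cls {A : Type u} [CommRing A] {H : Type u} [Ring H] [Algebra A H]
    {𝒜 : ℤ → Submodule A H} {S : Type u} [CommRing S] [Algebra A S]
    (V : GrMod A H 𝒜 S) : Groth A H 𝒜 S :=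
  QuotientAddGroup.mk (FreeAbelianGroup.of V)

section Char

variable {A : Type u} [CommRing A] {H : Type u} [Ring H] [Algebra A H]
  {𝒜 : ℤ → Submodule A H} {S : Type u} [CommRing S] [Algebra A S]

/-- The graded character of a graded module, as a function `H → S[t,t⁻¹]`:
it vanishes on the components of degree `≠ 0` and sends `h₀ ∈ H_0` to
`∑_i t^i χ_{V_i}(h₀)`. -/
noncomputable def GrMod.grChar [DirectSum.Decomposition 𝒜] (V : GrMod A H 𝒜 S) :
    H → LaurentPolynomial S :=
  fun h => ∑ᶠ i : ℤ, LaurentPolynomial.T i *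
    LaurentPolynomial.C
      (LinearMap.trace S (V.grading i) (V.degAct (DirectSum.decompose 𝒜 h 0) i))

/-- The set of irreducible graded characters `{χ^gr_{M⟨j⟩}}`: graded characters of graded
modules whose underlying ungraded module is simple (the grading of a simple module being
unique up to shift). -/
def IrrGrChars (A : Type u) [CommRing A] (H : Type u) [Ring H] [Algebra A H]
    (𝒜 : ℤ → Submodule A H) [DirectSum.Decomposition 𝒜]
    (S : Type u) [CommRing S] [Algebra A S] : Set (H → LaurentPolynomial S) :=
  { χ | ∃ V : GrMod A H 𝒜 S, V.forget.Simple ∧ χ = V.grChar }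

end Char

section FieldCoeffs

variable {A : Type u} [CommRing A] {H : Type u} [Ring H] [Algebra A H]
  {𝒜 : ℤ → Submodule A H} {F : Type u} [Field F] [Algebra A F]

/-- The characteristic polynomial of the action of a degree-`0` element of `H` on the
degree-`i` piece of a graded module. -/
noncomputable def GrMod.cpoly (V : GrMod A H 𝒜 F) (h : 𝒜 0) (i : ℤ) : Polynomial F :=
  LinearMap.charpoly (V.degAct h i)

/-- `L` is a graded `O ⊗_A H`-lattice in the graded `F ⊗_A H`-module `V`: an `O`-submodule,
stable under `H`, graded, finitely generated and free over `O`, any `O`-basis of which is an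
`F`-basis of `V`. -/
def GrMod.IsLattice (O : ValuationSubring F) (V : GrMod A H 𝒜 F)
    (L : AddSubgroup V.carrier) : Prop :=
  (∀ c : F, c ∈ O → ∀ x ∈ L, c • x ∈ L) ∧
  (∀ h : H, ∀ x ∈ L, h • x ∈ L) ∧
  (∀ x ∈ L, ∀ i : ℤ, ((DirectSum.decompose V.grading x i : V.grading i) : V.carrier) ∈ L) ∧
  ∃ (n : ℕ) (b : Fin n → V.carrier),
    LinearIndependent F b ∧ Submodule.span F (Set.range b) = ⊤ ∧ (∀ m, b m ∈ L) ∧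
    (∀ x ∈ L, ∃ c : Fin n → F, (∀ m, c m ∈ O) ∧ x = ∑ m, c m • b m)

/-- The subgroup `J(O)·L` of a lattice `L`, where `J(O)` is the maximal ideal
(= nonunits) of the valuation ring `O`. -/
def GrMod.mSub (O : ValuationSubring F) (V : GrMod A H 𝒜 F)
    (L : AddSubgroup V.carrier) : AddSubgroup V.carrier :=
  AddSubgroup.closure { z | ∃ c : O, ¬ IsUnit c ∧ ∃ y ∈ L, z = (c : F) • y }

/-- `φ` exhibits the graded `k ⊗_A H`-module `Y` as the modular reduction `k ⊗_O L` of the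
graded `O ⊗_A H`-lattice `L`, along the surjection `π : O → k` onto the residue field. -/
def GrMod.Reduces {k : Type u} [Field k] [Algebra A k]
    (O : ValuationSubring F) (π : O →+* k)
    (V : GrMod A H 𝒜 F) (L : AddSubgroup V.carrier)
    (Y : GrMod A H 𝒜 k) (φ : L →+ Y.carrier) : Prop :=
  Surjective φ ∧
  (∀ x : L, φ x = 0 ↔ (x : V.carrier) ∈ GrMod.mSub O V L) ∧
  (∀ (c : O) (x y : L), (y : V.carrier) = (c : F) • (x : V.carrier) → φ y = π c • φ x) ∧
  (∀ (h : H) (x y : L), (y : V.carrier) = h • (x : V.carrier) → φ y = h • φ x) ∧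
  (∀ (i : ℤ) (x : L), (x : V.carrier) ∈ V.grading i → φ x ∈ Y.grading i) ∧
  (∀ i : ℤ, ∀ y ∈ Y.grading i, ∃ x : L, (x : V.carrier) ∈ V.grading i ∧ φ x = y)

end FieldCoeffs


section MyAux
open Polynomial

section AuxVal
variable {K : Type u} [Field K] (O : ValuationSubring K)

theorem exists_div_mem {ι : Type*} (s : Finset ι) (c : ι → K) :
    (∃ i ∈ s, c i ≠ 0) → ∃ i₀ ∈ s, c i₀ ≠ 0 ∧ ∀ i ∈ s, c i / c i₀ ∈ O := by
  classical
  induction s using Finset.induction_on with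
  | empty => rintro ⟨i, hi, -⟩; exact absurd hi (Finset.notMem_empty i)
  | @insert a s ha ih =>
    intro hs
    by_cases h : ∃ i ∈ s, c i ≠ 0
    · obtain ⟨i₀, hi₀s, hi₀, hdiv⟩ := ih h
      rcases O.mem_or_inv_mem (c a / c i₀) with hmem | hmem
      · refine ⟨i₀, Finset.mem_insert_of_mem hi₀s, hi₀, fun i hi => ?_⟩
        rcases Finset.mem_insert.mp hi with rfl | hi
        · exact hmem
        · exact hdiv i hi
      · by_cases hca : c a = 0
        · refine ⟨i₀, Finset.mem_insert_of_mem hi₀s, hi₀, fun i hi => ?_⟩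
          rcases Finset.mem_insert.mp hi with rfl | hi
          · simpa [hca] using O.zero_mem
          · exact hdiv i hi
        · refine ⟨a, Finset.mem_insert_self a s, hca, fun i hi => ?_⟩
          rw [inv_div] at hmem
          rcases Finset.mem_insert.mp hi with rfl | hi
          · simpa [div_self hca] using O.one_mem
          · have heq : c i / c a = (c i / c i₀) * (c i₀ / c a) := by
              field_simp
            rw [heq]
            exact mul_mem (hdiv i hi) hmem
    · obtain ⟨i, hi, hci⟩ := hs
      rcases Finset.mem_insert.mp hi with rfl | hi'
      · refine ⟨i, Finset.mem_insert_self _ _, hci, fun j hj => ?_⟩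
        rcases Finset.mem_insert.mp hj with rfl | hj'
        · simpa [div_self hci] using O.one_mem
        · have hj0 : c j = 0 := by
            by_contra h'
            exact h ⟨j, hj', h'⟩
          simp only [hj0, zero_div]
          exact zero_mem O
      · exact absurd ⟨i, hi', hci⟩ h

theorem exists_indep_span {V : Type u} [AddCommGroup V] [Module K V]
    [Module O V] [IsScalarTower O K V] :
    ∀ (r : ℕ) (g : Fin r → V), ∃ (n : ℕ) (e : Fin n → V),
      LinearIndependent K e ∧
        Submodule.span O (Set.range e) = Submodule.span O (Set.range g) := by
  intro r
  induction r with
  | zero => exact fun g => ⟨0, g, linearIndependent_empty_type, rfl⟩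
  | succ r ih =>
    intro g
    by_cases hg : LinearIndependent K g
    · exact ⟨r + 1, g, hg, rfl⟩
    · obtain ⟨c, hrel, i, hci⟩ := Fintype.not_linearIndependent_iff.mp hg
      obtain ⟨i₀, -, hi₀, hdiv⟩ :=
        exists_div_mem O Finset.univ c ⟨i, Finset.mem_univ i, hci⟩
      obtain ⟨n, e, he, hsp⟩ := ih (g ∘ i₀.succAbove)
      refine ⟨n, e, he, hsp.trans (le_antisymm (Submodule.span_le.mpr ?_)
        (Submodule.span_le.mpr ?_))⟩
      · rintro - ⟨j, rfl⟩
        exact Submodule.subset_span ⟨i₀.succAbove j, rfl⟩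
      · rintro - ⟨j, rfl⟩
        rcases eq_or_ne j i₀ with rfl | hj
        · have h0 : c j • g j + ∑ t : Fin r, c (j.succAbove t) • g (j.succAbove t) = 0 := by
            rw [← Fin.sum_univ_succAbove (fun t => c t • g t) j]
            exact hrel
          have hexp : g j = ∑ t : Fin r,
              (-(c (j.succAbove t) / c j)) • g (j.succAbove t) := by
            have h1 : c j • g j = -∑ t : Fin r, c (j.succAbove t) • g (j.succAbove t) :=
              eq_neg_of_add_eq_zero_left h0
            have h2 : g j = (c j)⁻¹ • (c j • g j) := by
              rw [smul_smul, inv_mul_cancel₀ hi₀, one_smul]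
            rw [h2, h1, smul_neg, Finset.smul_sum, ← Finset.sum_neg_distrib]
            refine Finset.sum_congr rfl fun t _ => ?_
            rw [smul_smul, ← neg_smul, ← div_eq_inv_mul]
          rw [hexp]
          refine Submodule.sum_mem _ fun t _ => ?_
          have hmem : (-(c (j.succAbove t) / c j)) ∈ O :=
            neg_mem (hdiv _ (Finset.mem_univ _))
          rw [show (-(c (j.succAbove t) / c j)) • g (j.succAbove t)
              = (⟨-(c (j.succAbove t) / c j), hmem⟩ : O) • g (j.succAbove t) from
            algebraMap_smul K (⟨_, hmem⟩ : O) (g (j.succAbove t))]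
          exact Submodule.smul_mem _ _ (Submodule.subset_span ⟨t, rfl⟩)
        · obtain ⟨t, rfl⟩ := Fin.exists_succAbove_eq hj
          exact Submodule.subset_span ⟨t, rfl⟩

end AuxVal

theorem charpoly_eval_sc {n : Type u} [Fintype n] [DecidableEq n] {R : Type u} [CommRing R]
    (M : Matrix n n R) (μ : R) : M.charpoly.eval μ = (Matrix.scalar n μ - M).det := by
  rw [Matrix.charpoly, _root_.eval_det, Matrix.matPolyEquiv_charmatrix]
  rw [Polynomial.eval_sub, Polynomial.eval_X, Polynomial.eval_C]

theorem coeff_prod_X_sub_C_integral {A : Type u} {Kb : Type u} [CommRing A] [CommRing Kb]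
    [Algebra A Kb] (s : Multiset Kb) (hs : ∀ μ ∈ s, IsIntegral A μ) (m : ℕ) :
    IsIntegral A ((s.map fun a => Polynomial.X - Polynomial.C a).prod.coeff m) := by
  classical
  induction s using Multiset.induction_on generalizing m with
  | empty =>
    simp only [Multiset.map_zero, Multiset.prod_zero, Polynomial.coeff_one]
    split_ifs
    · exact isIntegral_one
    · exact isIntegral_zero
  | cons a s ih =>
    have hs' : ∀ μ ∈ s, IsIntegral A μ := fun μ hμ => hs μ (Multiset.mem_cons_of_mem hμ)
    rw [Multiset.map_cons, Multiset.prod_cons, sub_mul, Polynomial.coeff_sub]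
    refine IsIntegral.sub ?_ ?_
    · cases m with
      | zero =>
        rw [Polynomial.mul_coeff_zero, Polynomial.coeff_X_zero, zero_mul]
        exact isIntegral_zero
      | succ m =>
        rw [Polynomial.coeff_X_mul]
        exact ih hs' m
    · rw [Polynomial.coeff_C_mul]
      exact (hs a (Multiset.mem_cons_self a s)).mul (ih hs' m)

theorem mulVec_aeval {n : Type u} [Fintype n] [DecidableEq n] {F : Type u} [Field F]
    (M : Matrix n n F) (μ : F) (v : n → F) (hv : M.mulVec v = μ • v) (q : Polynomial F) :
    (Polynomial.aeval M q).mulVec v = q.eval μ • v := by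
  induction q using Polynomial.induction_on' with
  | add f g hf hg =>
    rw [map_add, Matrix.add_mulVec, hf, hg, Polynomial.eval_add, add_smul]
  | monomial d c =>
    have hpow : ∀ j : ℕ, (M ^ j).mulVec v = μ ^ j • v := by
      intro j
      induction j with
      | zero => simp [Matrix.one_mulVec]
      | succ j hj =>
        rw [pow_succ, ← Matrix.mulVec_mulVec, hv, Matrix.mulVec_smul, hj, smul_smul,
          pow_succ, mul_comm]
    rw [Polynomial.aeval_monomial, Polynomial.eval_monomial, ← Matrix.mulVec_mulVec, hpow,
      Matrix.algebraMap_eq_diagonal]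
    funext x
    simp [Matrix.mulVec_diagonal, Pi.algebraMap_apply, mul_assoc]

theorem charpoly_coeff_algebraMap
    (A : Type u) [CommRing A] [IsDomain A] [IsIntegrallyClosed A]
    (K : Type u) [Field K] [Algebra A K] [IsFractionRing A K]
    {n : Type u} [Fintype n] [DecidableEq n] (M : Matrix n n K) (p : Polynomial A)
    (hp : p.Monic) (hM : Polynomial.aeval M (p.map (algebraMap A K)) = 0) (m : ℕ) :
    ∃ a : A, M.charpoly.coeff m = algebraMap A K a := by
  classical
  let Kb : Type u := AlgebraicClosure K
  set φ : K →+* Kb := algebraMap K Kb with hφ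
  set M2 : Matrix n n Kb := M.map φ with hM2def
  have hcomm : (φ.mapMatrix : Matrix n n K →+* Matrix n n Kb).comp (algebraMap K (Matrix n n K)) =
      (algebraMap Kb (Matrix n n Kb)).comp φ := by
    refine RingHom.ext fun x => ?_
    rw [RingHom.comp_apply, RingHom.comp_apply, RingHom.mapMatrix_apply,
      Matrix.algebraMap_eq_diagonal, Matrix.algebraMap_eq_diagonal,
      Matrix.diagonal_map (map_zero φ)]
    simp [Pi.algebraMap_apply]
  have hMaev : Polynomial.aeval M2 (p.map (algebraMap A Kb)) = 0 := by
    have h1 : p.map (algebraMap A Kb) = (p.map (algebraMap A K)).map φ := by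
      rw [Polynomial.map_map, hφ, ← IsScalarTower.algebraMap_eq]
    have h2 := Polynomial.hom_eval₂ (p.map (algebraMap A K))
      (algebraMap K (Matrix n n K)) (φ.mapMatrix : Matrix n n K →+* Matrix n n Kb) M
    rw [h1, Polynomial.aeval_def, Polynomial.eval₂_map, ← hcomm, hM2def,
      ← RingHom.mapMatrix_apply, ← h2, ← Polynomial.aeval_def, hM, map_zero]
  have hint : ∀ μ ∈ M2.charpoly.roots, IsIntegral A μ := by
    intro μ hμ
    have hroot : M2.charpoly.IsRoot μ :=
      (Polynomial.mem_roots (M2.charpoly_monic.ne_zero)).mp hμ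
    have hdet : (Matrix.scalar n μ - M2).det = 0 := by
      rw [← charpoly_eval_sc]; exact hroot
    obtain ⟨v, hv, hmul⟩ := Matrix.exists_mulVec_eq_zero_iff.mpr hdet
    have hev : M2.mulVec v = μ • v := by
      rw [Matrix.sub_mulVec] at hmul
      have h1 : (Matrix.scalar n μ).mulVec v = μ • v := by
        funext x
        simp [Matrix.scalar, Matrix.mulVec_diagonal]
      rw [h1] at hmul
      exact (sub_eq_zero.mp hmul).symm
    have h0 : (p.map (algebraMap A Kb)).eval μ • v = 0 := by
      rw [← mulVec_aeval M2 μ v hev, hMaev, Matrix.zero_mulVec]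
    have heval : (p.map (algebraMap A Kb)).eval μ = 0 := by
      by_contra hne
      obtain ⟨x, hx⟩ := Function.ne_iff.mp hv
      have h5 := congrFun h0 x
      simp only [Pi.smul_apply, smul_eq_mul, Pi.zero_apply] at h5
      rcases mul_eq_zero.mp h5 with h | h
      · exact hne h
      · exact hx (by simpa using h)
    rw [Polynomial.eval_map] at heval
    exact ⟨p, hp, heval⟩
  have hsp : M2.charpoly =
      (M2.charpoly.roots.map fun a => Polynomial.X - Polynomial.C a).prod :=
    (IsAlgClosed.splits M2.charpoly).eq_prod_roots_of_monic M2.charpoly_monic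
  have hco : IsIntegral A (M2.charpoly.coeff m) := by
    rw [hsp]
    exact coeff_prod_X_sub_C_integral _ hint m
  have h3 : M2.charpoly.coeff m = φ (M.charpoly.coeff m) := by
    rw [hM2def, Matrix.charpoly_map, Polynomial.coeff_map]
  rw [h3] at hco
  have h4 : IsIntegral A (M.charpoly.coeff m) :=
    (isIntegral_algHom_iff (IsScalarTower.toAlgHom A K Kb)
      (algebraMap K Kb).injective).mp hco
  obtain ⟨a, ha⟩ := IsIntegrallyClosed.isIntegral_iff.mp h4
  exact ⟨a, ha.symm⟩

theorem charpoly_coeff_algebraMap_end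
    (A : Type u) [CommRing A] [IsDomain A] [IsIntegrallyClosed A]
    (K : Type u) [Field K] [Algebra A K] [IsFractionRing A K]
    {W : Type u} [AddCommGroup W] [Module K W] [Module.Finite K W] [Module.Free K W]
    (f : W →ₗ[K] W) (p : Polynomial A) (hp : p.Monic)
    (hf : Polynomial.aeval f (p.map (algebraMap A K)) = 0) (m : ℕ) :
    ∃ a : A, f.charpoly.coeff m = algebraMap A K a := by
  classical
  let b := Module.Free.chooseBasis K W
  have hAE : LinearMap.toMatrixAlgEquiv b f = LinearMap.toMatrix b b f := rfl
  have haevM : Polynomial.aeval (LinearMap.toMatrix b b f) (p.map (algebraMap A K)) = 0 := by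
    rw [← hAE, Polynomial.aeval_algHom_apply (LinearMap.toMatrixAlgEquiv b) f
      (p.map (algebraMap A K)), hf, map_zero]
  obtain ⟨a, ha⟩ := charpoly_coeff_algebraMap A K (LinearMap.toMatrix b b f) p hp haevM m
  refine ⟨a, ?_⟩
  rw [← LinearMap.charpoly_toMatrix f b]
  exact ha

end MyAux

set_option maxHeartbeats 1000000 in
/-- In the setting of the graded decomposition map, the diagram
`p_L ∘ d^gr_θ = t_θ ∘ p_K` commutes.  Concretely: for every finite-dimensional graded
`KH`-module `V` with graded `O ⊗_A H`-lattice `Ṽ` and modular reduction `k ⊗_O Ṽ`, every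
`h₀ ∈ H_0` and every `i ∈ ℤ`, the characteristic polynomial of `ρ_{V_i}(h₀)` has all its
coefficients in (the image of) `A`, and the characteristic polynomial of the action of `h₀`
on `(k ⊗_O Ṽ)_i` is obtained from it by applying `θ` coefficientwise. -/
theorem graded_decomposition_map_diagram
    (A : Type u) [CommRing A] [IsDomain A] [IsIntegrallyClosed A]
    (K : Type u) [Field K] [Algebra A K] [IsFractionRing A K]
    (H : Type u) [Ring H] [Algebra A H] [Module.Free A H] [Module.Finite A H]
    (𝒜 : ℤ → Submodule A H) [GradedAlgebra 𝒜]
    (L : Type u) [Field L] [Algebra A L]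
    (hLfrac : ∀ x : L, ∃ a b : A,
      algebraMap A L b ≠ 0 ∧ x * algebraMap A L b = algebraMap A L a)
    (O : ValuationSubring K) (hAO : ∀ a : A, algebraMap A K a ∈ O)
    (hJO : ∀ a : A, ¬ IsUnit (⟨algebraMap A K a, hAO a⟩ : O) ↔ algebraMap A L a = 0)
    (k : Type u) [Field k] [Algebra A k]
    (π : O →+* k) (hπsurj : Function.Surjective π)
    (hπker : ∀ o : O, π o = 0 ↔ ¬ IsUnit o)
    (hπA : ∀ a : A, π ⟨algebraMap A K a, hAO a⟩ = algebraMap A k a)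
    (τ : L →+* k) (hτ : ∀ a : A, τ (algebraMap A L a) = algebraMap A k a)
    (hass : SplitAlg A H L ∨ (Function.Surjective τ ∧ PerfectField L)) :
    ∀ (V : GrMod A H 𝒜 K) (LV : AddSubgroup V.carrier), V.IsLattice O LV →
    ∀ (Y : GrMod A H 𝒜 k) (φV : LV →+ Y.carrier), GrMod.Reduces O π V LV Y φV →
    ∀ (h : 𝒜 0) (i : ℤ),
      (∀ m : ℕ, ∃ a : A, (V.cpoly h i).coeff m = algebraMap A K a) ∧
      (∀ (m : ℕ) (a : A), (V.cpoly h i).coeff m = algebraMap A K a →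
        (Y.cpoly h i).coeff m = algebraMap A k a) := by
  classical
  intro V LV hlat Y φV hred h i
  obtain ⟨hO, hHs, hGr, n0, bb, hbli, hbsp, hbL, hbO⟩ := hlat
  obtain ⟨hsur, hker, hsc, hsh, hgr1, hgr2⟩ := hred
  letI : Module O V.carrier := Module.compHom V.carrier (algebraMap O K)
  haveI : IsScalarTower O K V.carrier :=
    ⟨fun c x v => by rw [Algebra.smul_def, mul_smul]; rfl⟩
  have hsmulOK : ∀ (c : O) (x : V.carrier), c • x = (c : K) • x :=
    fun c x => (algebraMap_smul K c x).symm
  -- the lattice as an O-submodule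
  let LVO : Submodule O V.carrier :=
    { carrier := LV
      add_mem' := fun ha hb => LV.add_mem ha hb
      zero_mem' := LV.zero_mem
      smul_mem' := fun c x hx => by
        rw [show c • x = (c : K) • x from hsmulOK c x]
        exact hO c c.2 x hx }
  have hLVO : ∀ x : V.carrier, x ∈ LVO ↔ x ∈ LV := fun x => Iff.rfl
  -- projection onto the degree-j component, as a K-linear map
  let proj : ℤ → V.carrier →ₗ[K] V.carrier := fun j =>
    (V.grading j).subtype ∘ₗ
      (DirectSum.component K ℤ (fun t => ↥(V.grading t)) j) ∘ₗ
        (DirectSum.decomposeLinearEquiv V.grading).toLinearMap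
  have hproj : ∀ (j : ℤ) (x : V.carrier),
      proj j x = ((DirectSum.decompose V.grading x j : V.grading j) : V.carrier) :=
    fun j x => rfl
  -- generators of the degree-j part of the lattice
  let g : ℤ → Fin n0 → V.carrier := fun j mI => proj j (bb mI)
  have hg_grading : ∀ j mI, g j mI ∈ V.grading j := fun j mI => by
    rw [show g j mI = proj j (bb mI) from rfl, hproj]
    exact SetLike.coe_mem _
  have hg_LV : ∀ j mI, g j mI ∈ LV := fun j mI => by
    rw [show g j mI = proj j (bb mI) from rfl, hproj]
    exact hGr (bb mI) (hbL mI) j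
  let Li : ℤ → Submodule O V.carrier := fun j => Submodule.span O (Set.range (g j))
  -- choose K-linearly independent O-spanning families in each degree
  choose mdim efam hefree hespan using fun j => exists_indep_span O n0 (g j)
  have he_Li : ∀ j t, efam j t ∈ Li j := fun j t => by
    rw [show Li j = Submodule.span O (Set.range (g j)) from rfl, ← hespan j]
    exact Submodule.subset_span ⟨t, rfl⟩
  have hLi_le_LV : ∀ j, Li j ≤ LVO :=
    fun j => Submodule.span_le.mpr (by rintro - ⟨mI, rfl⟩; exact hg_LV j mI)
  have hLi_le_gr : ∀ j, Li j ≤ (V.grading j).restrictScalars O :=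
    fun j => Submodule.span_le.mpr (by rintro - ⟨mI, rfl⟩; exact hg_grading j mI)
  have he_LV : ∀ j t, efam j t ∈ LV := fun j t => hLi_le_LV j (he_Li j t)
  have he_grading : ∀ j t, efam j t ∈ V.grading j := fun j t => hLi_le_gr j (he_Li j t)
  -- the degree-j part of the lattice is spanned by the chosen family
  have hLVgr_le : ∀ j, ∀ x ∈ LV, x ∈ V.grading j → x ∈ Li j := by
    intro j x hx hxg
    obtain ⟨c, hc, hxe⟩ := hbO x hx
    have h1 : x = ∑ mI, c mI • g j mI := by
      have h2 : proj j x = x := by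
        rw [hproj]; exact DirectSum.decompose_of_mem_same _ hxg
      have h3 : proj j (∑ mI, c mI • bb mI) = ∑ mI, c mI • g j mI := by
        rw [map_sum]
        exact Finset.sum_congr rfl fun mI _ => by rw [map_smul]
      rw [← h2, hxe, h3]
    rw [h1]
    refine Submodule.sum_mem _ fun mI _ => ?_
    rw [show c mI • g j mI = (⟨c mI, hc mI⟩ : O) • g j mI from
      (algebraMap_smul K (⟨c mI, hc mI⟩ : O) (g j mI)).symm]
    exact Submodule.smul_mem _ _ (Submodule.subset_span ⟨mI, rfl⟩)
  -- bases of the graded pieces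
  let eS : ∀ j, Fin (mdim j) → V.grading j := fun j t => ⟨efam j t, he_grading j t⟩
  have hindep_sub : ∀ j, LinearIndependent K (eS j) := by
    intro j
    apply LinearIndependent.of_comp ((V.grading j).subtype)
    exact hefree j
  have hspan_sub : ∀ j, ⊤ ≤ Submodule.span K (Set.range (eS j)) := by
    intro j x _
    have hxV : (x : V.carrier) ∈ Submodule.span K (Set.range (efam j)) := by
      have hxb : (x : V.carrier) ∈ Submodule.span K (Set.range bb) := by
        rw [hbsp]; trivial
      obtain ⟨κ, hκ⟩ := (Submodule.mem_span_range_iff_exists_fun K).mp hxb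
      set d : K := ∏ mI, if κ mI ∈ O then 1 else (κ mI)⁻¹ with hd
      have hdfac : ∀ mI : Fin n0, (if κ mI ∈ O then 1 else (κ mI)⁻¹) ∈ O := by
        intro mI; split_ifs with hm
        · exact O.one_mem
        · rcases O.mem_or_inv_mem (κ mI) with h' | h'
          · exact absurd h' hm
          · exact h'
      have hdO : d ∈ O := Subring.prod_mem _ fun mI _ => hdfac mI
      have hdne : d ≠ 0 := by
        rw [hd]
        apply Finset.prod_ne_zero_iff.mpr
        intro mI _
        split_ifs with hm
        · exact one_ne_zero
        · exact inv_ne_zero fun h0 => hm (by rw [h0]; exact O.zero_mem)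
      have hdκ : ∀ mI, d * κ mI ∈ O := by
        intro mI
        by_cases hm : κ mI ∈ O
        · exact Subring.mul_mem _ hdO hm
        · have hκne : κ mI ≠ 0 := fun h0 => hm (by rw [h0]; exact O.zero_mem)
          have hdd : d = (κ mI)⁻¹ * ∏ mJ ∈ Finset.univ.erase mI,
              (if κ mJ ∈ O then 1 else (κ mJ)⁻¹) := by
            rw [hd, ← Finset.mul_prod_erase Finset.univ _ (Finset.mem_univ mI), if_neg hm]
          rw [hdd, mul_comm ((κ mI)⁻¹) _, mul_assoc, inv_mul_cancel₀ hκne, mul_one]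
          exact Subring.prod_mem _ fun mJ _ => hdfac mJ
      have hdx_LV : d • (x : V.carrier) ∈ LV := by
        have hsum : d • (x : V.carrier) = ∑ mI, (d * κ mI) • bb mI := by
          rw [← hκ, Finset.smul_sum]
          exact Finset.sum_congr rfl fun mI _ => smul_smul d (κ mI) (bb mI)
        rw [hsum]
        refine Submodule.sum_mem LVO fun mI _ => ?_
        rw [show (d * κ mI) • bb mI = (⟨d * κ mI, hdκ mI⟩ : O) • bb mI from
          (algebraMap_smul K (⟨d * κ mI, hdκ mI⟩ : O) (bb mI)).symm]
        exact Submodule.smul_mem LVO _ (hbL mI)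
      have hdx_gr : d • (x : V.carrier) ∈ V.grading j := Submodule.smul_mem _ d x.2
      have hdx_Li : d • (x : V.carrier) ∈ Submodule.span O (Set.range (efam j)) := by
        rw [hespan j]
        exact hLVgr_le j _ hdx_LV hdx_gr
      have hdx_spanK : d • (x : V.carrier) ∈ Submodule.span K (Set.range (efam j)) :=
        Submodule.span_le_restrictScalars O K _ hdx_Li
      have h5 : (x : V.carrier) = d⁻¹ • (d • (x : V.carrier)) := by
        rw [smul_smul, inv_mul_cancel₀ hdne, one_smul]
      rw [h5]
      exact Submodule.smul_mem _ _ hdx_spanK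
    have hmap : Submodule.map (V.grading j).subtype
        (Submodule.span K (Set.range (eS j))) = Submodule.span K (Set.range (efam j)) := by
      rw [Submodule.map_span]
      congr 1
      rw [← Set.range_comp]
      rfl
    rw [← hmap] at hxV
    obtain ⟨y, hy, hyx⟩ := hxV
    have : y = x := Subtype.ext hyx
    rwa [← this]
  let Wb : ∀ j, Module.Basis (Fin (mdim j)) K (V.grading j) :=
    fun j => Module.Basis.mk (hindep_sub j) (hspan_sub j)
  have hWb : ∀ j t, ((Wb j) t : V.carrier) = efam j t := by
    intro j t
    rw [show (Wb j) t = (Module.Basis.mk (hindep_sub j) (hspan_sub j)) t from rfl, Module.Basis.mk_apply]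
  -- the collected basis of V
  let BE : Module.Basis ((j : ℤ) × Fin (mdim j)) K V.carrier :=
    (DirectSum.Decomposition.isInternal V.grading).collectedBasis Wb
  have hBE : ∀ σ : (j : ℤ) × Fin (mdim j), BE σ = efam σ.1 σ.2 := by
    intro σ
    rw [show BE σ = ((Wb σ.1) σ.2 : V.carrier) from congrFun
      (DirectSum.IsInternal.collectedBasis_coe _ Wb) σ, hWb]
  -- every lattice element is an O-combination of the collected basis
  have hLVO_le : ∀ x ∈ LV, x ∈ Submodule.span O
      (Set.range fun σ : (j : ℤ) × Fin (mdim j) => efam σ.1 σ.2) := by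
    intro x hx
    rw [← DirectSum.sum_support_decompose V.grading x]
    refine Submodule.sum_mem _ fun j _ => ?_
    have h1 : ((DirectSum.decompose V.grading x j : V.grading j) : V.carrier) ∈ Li j :=
      hLVgr_le j _ (hGr x hx j) (SetLike.coe_mem _)
    have h2 : ((DirectSum.decompose V.grading x j : V.grading j) : V.carrier) ∈
        Submodule.span O (Set.range (efam j)) := by rw [hespan j]; exact h1
    refine Submodule.span_le.mpr ?_ h2
    rintro - ⟨t, rfl⟩
    exact Submodule.subset_span ⟨⟨j, t⟩, rfl⟩
  -- coordinates of lattice elements lie in O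
  have hreprO : ∀ x ∈ LV, ∀ σ : (j : ℤ) × Fin (mdim j), ∃ o : O, BE.repr x σ = (o : K) := by
    intro x hx
    have hx' := hLVO_le x hx
    refine Submodule.span_induction ?_ ?_ ?_ ?_ hx'
    · rintro y ⟨σ', rfl⟩ σ
      show ∃ o : O, BE.repr (efam σ'.1 σ'.2) σ = (o : K)
      rw [← hBE σ', BE.repr_self]
      rcases eq_or_ne σ' σ with rfl | hne
      · exact ⟨1, by simp⟩
      · exact ⟨0, by simp [Finsupp.single_eq_of_ne hne.symm]⟩
    · intro σ; exact ⟨0, by simp⟩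
    · intro y z _ _ hy hz σ
      obtain ⟨o1, h1⟩ := hy σ
      obtain ⟨o2, h2⟩ := hz σ
      exact ⟨o1 + o2, by rw [map_add, Finsupp.add_apply, h1, h2]; push_cast; ring⟩
    · intro c y _ hy σ
      obtain ⟨o, h1⟩ := hy σ
      refine ⟨c * o, ?_⟩
      rw [show c • y = (c : K) • y from hsmulOK c y, map_smul, Finsupp.smul_apply,
        h1, smul_eq_mul]
      push_cast; ring
  -- elements of J(O)·L have coordinates in the maximal ideal
  have hmSub : ∀ x ∈ GrMod.mSub O V LV, ∀ σ : (j : ℤ) × Fin (mdim j),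
      ∃ o : O, ¬ IsUnit o ∧ BE.repr x σ = (o : K) := by
    intro x hx
    refine AddSubgroup.closure_induction ?_ ?_ ?_ ?_ hx
    · rintro y ⟨c, hc, z, hz, rfl⟩ σ
      obtain ⟨o, ho⟩ := hreprO z hz σ
      refine ⟨c * o, fun hu => hc (isUnit_of_mul_isUnit_left hu), ?_⟩
      rw [map_smul, Finsupp.smul_apply, ho, smul_eq_mul]
      push_cast; ring
    · intro σ; exact ⟨0, not_isUnit_zero, by simp⟩
    · intro y z _ _ hy hz σ
      obtain ⟨o1, hn1, h1⟩ := hy σ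
      obtain ⟨o2, hn2, h2⟩ := hz σ
      refine ⟨o1 + o2, ?_, ?_⟩
      · exact fun hu => (IsLocalRing.nonunits_add (mem_nonunits_iff.mpr hn1)
          (mem_nonunits_iff.mpr hn2)) hu
      · rw [map_add, Finsupp.add_apply, h1, h2]; push_cast; ring
    · intro y _ hy σ
      obtain ⟨o, hn, h1⟩ := hy σ
      refine ⟨-o, fun hu => hn (by simpa using hu.neg), ?_⟩
      rw [map_neg, Finsupp.neg_apply, h1]; push_cast; ring
  -- auxiliary: evaluate the collected-basis coordinates of degree-i combinations
  have hsingle : ∀ (t t₀ : Fin (mdim i)),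
      (Finsupp.single (⟨i, t⟩ : (j : ℤ) × Fin (mdim j)) (1 : K)) ⟨i, t₀⟩
        = if t = t₀ then 1 else 0 := by
    intro t t₀
    rcases eq_or_ne t t₀ with rfl | hne
    · simp
    · rw [if_neg hne]
      refine Finsupp.single_eq_of_ne ?_
      intro hcon
      exact hne (eq_of_heq (Sigma.mk.inj_iff.mp hcon).2).symm
  have hrepr : ∀ (γ : Fin (mdim i) → K) (t₀ : Fin (mdim i)),
      BE.repr (∑ t, γ t • efam i t) ⟨i, t₀⟩ = γ t₀ := by
    intro γ t₀
    have h1 : (∑ t, γ t • efam i t) = ∑ t, γ t • BE ⟨i, t⟩ :=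
      Finset.sum_congr rfl fun t _ => by rw [hBE]
    rw [h1, map_sum, Finsupp.finset_sum_apply]
    have h2 : ∀ t, (BE.repr (γ t • BE ⟨i, t⟩)) ⟨i, t₀⟩
        = γ t * (if t = t₀ then 1 else 0) := by
      intro t
      rw [map_smul, BE.repr_self, Finsupp.smul_apply, hsingle, smul_eq_mul]
    rw [Finset.sum_congr rfl fun t _ => h2 t]
    simp [mul_ite]
  -- the φ-image of an O-combination of degree-i basis vectors
  have hmemt : ∀ (γ : Fin (mdim i) → O) (t : Fin (mdim i)),
      (γ t : K) • efam i t ∈ LV := fun γ t => hO _ (γ t).2 _ (he_LV i t)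
  have hφsum : ∀ (γ : Fin (mdim i) → O) (hx : (∑ t, (γ t : K) • efam i t) ∈ LV),
      φV ⟨∑ t, (γ t : K) • efam i t, hx⟩
        = ∑ t, π (γ t) • φV ⟨efam i t, he_LV i t⟩ := by
    intro γ hx
    have hdec : (⟨∑ t, (γ t : K) • efam i t, hx⟩ : LV)
        = ∑ t, (⟨(γ t : K) • efam i t, hmemt γ t⟩ : LV) := by
      apply Subtype.ext
      rw [AddSubmonoidClass.coe_finset_sum]
    rw [hdec, map_sum]
    exact Finset.sum_congr rfl fun t _ =>
      hsc (γ t) ⟨efam i t, he_LV i t⟩ ⟨(γ t : K) • efam i t, hmemt γ t⟩ rfl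
  -- the degree-i basis of Y
  let Ffam : Fin (mdim i) → Y.carrier := fun t => φV ⟨efam i t, he_LV i t⟩
  have hF_gr : ∀ t, Ffam t ∈ Y.grading i :=
    fun t => hgr1 i ⟨efam i t, he_LV i t⟩ (he_grading i t)
  let FS : Fin (mdim i) → Y.grading i := fun t => ⟨Ffam t, hF_gr t⟩
  have hFind : LinearIndependent k FS := by
    rw [Fintype.linearIndependent_iff]
    intro dcoef hsum0
    choose γ hγ using fun t => hπsurj (dcoef t)
    have hxLV : (∑ t, (γ t : K) • efam i t) ∈ LV :=
      Submodule.sum_mem LVO fun t _ => hmemt γ t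
    have hφ0 : φV ⟨∑ t, (γ t : K) • efam i t, hxLV⟩ = 0 := by
      rw [hφsum γ hxLV]
      have hco : ∑ t, π (γ t) • Ffam t
          = ((∑ t, dcoef t • FS t : Y.grading i) : Y.carrier) := by
        rw [AddSubmonoidClass.coe_finset_sum]
        exact Finset.sum_congr rfl fun t _ => by rw [hγ t]; rfl
      rw [hco, hsum0]
      rfl
    have hxm : (∑ t, (γ t : K) • efam i t) ∈ GrMod.mSub O V LV := (hker _).mp hφ0
    intro t₀
    obtain ⟨o, hno, ho⟩ := hmSub _ hxm ⟨i, t₀⟩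
    rw [hrepr (fun t => (γ t : K)) t₀] at ho
    have hγo : γ t₀ = o := Subtype.ext ho
    rw [← hγ t₀, hγo]
    exact (hπker o).mpr hno
  have hFspan : ⊤ ≤ Submodule.span k (Set.range FS) := by
    intro y _
    obtain ⟨x, hxgr, hφx⟩ := hgr2 i (y : Y.carrier) y.2
    have hxLi : (x : V.carrier) ∈ Submodule.span O (Set.range (efam i)) := by
      rw [hespan i]
      exact hLVgr_le i _ x.2 hxgr
    obtain ⟨γ, hγ⟩ := (Submodule.mem_span_range_iff_exists_fun O).mp hxLi
    have hxeq : (x : V.carrier) = ∑ t, (γ t : K) • efam i t := by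
      rw [← hγ]
      exact Finset.sum_congr rfl fun t _ => (hsmulOK (γ t) (efam i t))
    have hx' : (∑ t, (γ t : K) • efam i t) ∈ LV := hxeq ▸ x.2
    have hφeq : φV x = ∑ t, π (γ t) • Ffam t := by
      rw [show x = (⟨∑ t, (γ t : K) • efam i t, hx'⟩ : LV) from Subtype.ext hxeq, hφsum]
    have hyeq : y = ∑ t, π (γ t) • FS t := by
      apply Subtype.ext
      rw [AddSubmonoidClass.coe_finset_sum, ← hφx, hφeq]
      rfl
    rw [hyeq]
    exact Submodule.sum_mem _ fun t _ =>
      Submodule.smul_mem _ _ (Submodule.subset_span ⟨t, rfl⟩)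
  let BY : Module.Basis (Fin (mdim i)) k (Y.grading i) := Module.Basis.mk hFind hFspan
  have hBY : ∀ t, ((BY t : Y.grading i) : Y.carrier) = Ffam t := by
    intro t
    rw [show BY t = (Module.Basis.mk hFind hFspan) t from rfl, Module.Basis.mk_apply]
  -- the matrix of the action of h in degree i, over O
  have hhe : ∀ t, (h : H) • efam i t ∈ LV := fun t => hHs _ _ (he_LV i t)
  have hhe_gr : ∀ t, (h : H) • efam i t ∈ V.grading i := by
    intro t
    have := V.grading_smul 0 i (h : H) h.2 (efam i t) (he_grading i t)
    rwa [zero_add] at this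
  have hhspan : ∀ t, ((h : H) • efam i t) ∈ Submodule.span O (Set.range (efam i)) := by
    intro t
    rw [hespan i]
    exact hLVgr_le i _ (hhe t) (hhe_gr t)
  choose MOc hMOc using fun t => (Submodule.mem_span_range_iff_exists_fun O).mp (hhspan t)
  let MO : Matrix (Fin (mdim i)) (Fin (mdim i)) O := fun l t => MOc t l
  have hMOK : ∀ t, (h : H) • efam i t = ∑ l, (MO l t : K) • efam i l := by
    intro t
    rw [← hMOc t]
    exact Finset.sum_congr rfl fun l _ => (hsmulOK (MOc t l) (efam i l))
  -- the matrix of degAct over K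
  have hVmat : LinearMap.toMatrix (Wb i) (Wb i) (V.degAct h i)
      = MO.map (algebraMap O K) := by
    ext l t
    rw [LinearMap.toMatrix_apply]
    have h1 : V.degAct h i ((Wb i) t) = ∑ l', ((MO l' t : K)) • (Wb i) l' := by
      apply Subtype.ext
      rw [AddSubmonoidClass.coe_finset_sum]
      have h2 : ((V.degAct h i ((Wb i) t) : V.grading i) : V.carrier)
          = (h : H) • (((Wb i) t : V.grading i) : V.carrier) := rfl
      rw [h2, hWb, hMOK]
      exact Finset.sum_congr rfl fun l' _ => by
        rw [show (((MO l' t : K) • (Wb i) l' : V.grading i) : V.carrier)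
          = (MO l' t : K) • (((Wb i) l' : V.grading i) : V.carrier) from rfl, hWb]
    rw [h1, Module.Basis.repr_sum_self]
    rfl
  haveI : Module.Finite K ↥(V.grading i) := inferInstance
  have hVcp : V.cpoly h i = MO.charpoly.map (algebraMap O K) := by
    rw [show V.cpoly h i = LinearMap.charpoly (V.degAct h i) from rfl,
      ← LinearMap.charpoly_toMatrix (V.degAct h i) (Wb i), hVmat, Matrix.charpoly_map]
  -- the matrix of degAct on Y
  have hYmat : LinearMap.toMatrix BY BY (Y.degAct h i) = MO.map π := by
    ext l t
    rw [LinearMap.toMatrix_apply]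
    have hsmulF : (h : H) • Ffam t = ∑ l', π (MO l' t) • Ffam l' := by
      have h1 : (h : H) • Ffam t = φV ⟨(h : H) • efam i t, hhe t⟩ :=
        (hsh (h : H) ⟨efam i t, he_LV i t⟩ ⟨(h : H) • efam i t, hhe t⟩ rfl).symm
      have hmem' : (∑ l', ((MO · t) l' : K) • efam i l') ∈ LV := by
        rw [← hMOK t]; exact hhe t
      have h2 : (⟨(h : H) • efam i t, hhe t⟩ : LV)
          = ⟨∑ l', ((MO · t) l' : K) • efam i l', hmem'⟩ := Subtype.ext (hMOK t)
      rw [h1, h2, hφsum]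
    have h1 : Y.degAct h i (BY t) = ∑ l', π (MO l' t) • BY l' := by
      apply Subtype.ext
      rw [AddSubmonoidClass.coe_finset_sum]
      have h2 : ((Y.degAct h i (BY t) : Y.grading i) : Y.carrier)
          = (h : H) • ((BY t : Y.grading i) : Y.carrier) := rfl
      rw [h2, hBY, hsmulF]
      exact Finset.sum_congr rfl fun l' _ => by
        rw [show ((π (MO l' t) • BY l' : Y.grading i) : Y.carrier)
          = π (MO l' t) • ((BY l' : Y.grading i) : Y.carrier) from rfl, hBY]
    rw [h1, Module.Basis.repr_sum_self]
    rfl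
  haveI : Module.Finite k ↥(Y.grading i) := inferInstance
  have hYcp : Y.cpoly h i = MO.charpoly.map (π : O →+* k) := by
    rw [show Y.cpoly h i = LinearMap.charpoly (Y.degAct h i) from rfl,
      ← LinearMap.charpoly_toMatrix (Y.degAct h i) BY, hYmat, Matrix.charpoly_map]
  constructor
  · -- part A : coefficients come from A
    intro m
    obtain ⟨p, hpmon, hpev⟩ := Algebra.IsIntegral.isIntegral (R := A) (h : H)
    have hpev' : Polynomial.aeval (h : H) p = 0 := hpev
    have hkey : ∀ q : Polynomial A, ∀ x : V.grading i,
        ((Polynomial.aeval (V.degAct h i) (q.map (algebraMap A K)) x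
          : V.grading i) : V.carrier)
          = (Polynomial.aeval (h : H) q) • (x : V.carrier) := by
      intro q
      induction q using Polynomial.induction_on' with
      | add f g hf hg =>
        intro x
        rw [Polynomial.map_add, map_add, map_add, LinearMap.add_apply,
          Submodule.coe_add, hf, hg, add_smul]
      | monomial d c =>
        intro x
        have hpow : ∀ (j : ℕ) (x : V.grading i),
            (((V.degAct h i ^ j) x : V.grading i) : V.carrier)
              = (h : H) ^ j • (x : V.carrier) := by
          intro j
          induction j with
          | zero => intro x; rw [pow_zero, pow_zero, one_smul]; rfl
          | succ j hj =>
            intro x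
            rw [pow_succ, Module.End.mul_apply, hj, pow_succ, mul_smul]
            rfl
        rw [Polynomial.map_monomial, Polynomial.aeval_monomial, Polynomial.aeval_monomial,
          Module.End.mul_apply, Module.algebraMap_end_apply]
        rw [show (((algebraMap A K c • ((V.degAct h i ^ d) x) : V.grading i))
            : V.carrier) = algebraMap A K c
              • (((V.degAct h i ^ d) x : V.grading i) : V.carrier) from rfl]
        rw [hpow d x, ← V.compat c ((h : H) ^ d • (x : V.carrier)), ← mul_smul]
    have haev : Polynomial.aeval (V.degAct h i) (p.map (algebraMap A K)) = 0 := by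
      apply LinearMap.ext
      intro x
      apply Subtype.ext
      rw [hkey p x, hpev', zero_smul]
      rfl
    obtain ⟨a, ha⟩ := charpoly_coeff_algebraMap_end A K (V.degAct h i) p hpmon haev m
    exact ⟨a, ha⟩
  · -- part B : compatibility with reduction
    intro m a ha
    rw [hVcp, Polynomial.coeff_map] at ha
    have h1 : MO.charpoly.coeff m = ⟨algebraMap A K a, hAO a⟩ := Subtype.ext ha
    rw [hYcp, Polynomial.coeff_map, h1, hπA]
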